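/- arXiv:2305.16440 — 3 statements merged into one kernel-verified Lean document; each statement's English description precedes it below -/
import Mathlib

section
/- Let A₁ and A₂ be real matrices with the same number of columns d, satisfying A₁ᵀA₁ ⪰ A₂ᵀA₂ in the Loewner (positive semidefinite) order. Then for all real matrices B₁ ∈ ℝ^{d×p} and B₂ ∈ ℝ^{d×q}, one has ‖P⊥_{A₁B₁} A₁ B₂‖_F² ≥ ‖P⊥_{A₂B₁} A₂ B₂‖_F². -/
open Matrix

/-- The orthogonal projection matrix onto the column space of `M`,
i.e. `P_M = M (Mᵀ M)† Mᵀ`, characterized as the matrix of the orthogonal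
projection of Euclidean space onto the column space of `M`. -/
noncomputable def projMat {a b : ℕ} (M : Matrix (Fin a) (Fin b) ℝ) :
    Matrix (Fin a) (Fin a) ℝ :=
  Matrix.toEuclideanLin.symm
    ((LinearMap.range (Matrix.toEuclideanLin M)).subtype ∘ₗ
      (Submodule.orthogonalProjectionOnto (LinearMap.range (Matrix.toEuclideanLin M))).toLinearMap)

/-- Squared Frobenius norm of a matrix. -/
def froSq {a b : ℕ} (M : Matrix (Fin a) (Fin b) ℝ) : ℝ := ∑ i, ∑ j, (M i j) ^ 2


lemma toEuclideanLin_mul {a b c : ℕ} (M : Matrix (Fin a) (Fin b) ℝ)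
    (N : Matrix (Fin b) (Fin c) ℝ) :
    toEuclideanLin (M * N) = toEuclideanLin M ∘ₗ toEuclideanLin N := by
  ext v
  simp [toEuclideanLin_apply, mulVec_mulVec]

lemma toEuclideanLin_one_sub_projMat {a b : ℕ} (M : Matrix (Fin a) (Fin b) ℝ)
    (v : EuclideanSpace ℝ (Fin a)) :
    toEuclideanLin (1 - projMat M) v
      = v - (Submodule.orthogonalProjectionOnto (LinearMap.range (toEuclideanLin M)) v : EuclideanSpace ℝ (Fin a)) := by
  rw [map_sub]
  simp [projMat, toEuclideanLin_apply, Matrix.one_mulVec]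

lemma norm_proj_compl_min {a : ℕ} (K : Submodule ℝ (EuclideanSpace ℝ (Fin a)))
    (v w : EuclideanSpace ℝ (Fin a)) (hw : w ∈ K) :
    ‖v - (Submodule.orthogonalProjectionOnto K v : EuclideanSpace ℝ (Fin a))‖ ≤ ‖v - w‖ := by
  have h : v - w = (v - (Submodule.orthogonalProjectionOnto K v : EuclideanSpace ℝ (Fin a))) + ((Submodule.orthogonalProjectionOnto K v : EuclideanSpace ℝ (Fin a)) - w) := by
    abel
  have hperp : inner (𝕜 := ℝ) (v - (Submodule.orthogonalProjectionOnto K v : EuclideanSpace ℝ (Fin a)))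
      ((Submodule.orthogonalProjectionOnto K v : EuclideanSpace ℝ (Fin a)) - w) = 0 := by
    rw [real_inner_comm]
    exact (Submodule.sub_starProjection_mem_orthogonal (K := K) v) _
      (K.sub_mem (Submodule.orthogonalProjectionOnto K v).2 hw)
  have := norm_add_sq_real (v - (Submodule.orthogonalProjectionOnto K v : EuclideanSpace ℝ (Fin a)))
      ((Submodule.orthogonalProjectionOnto K v : EuclideanSpace ℝ (Fin a)) - w)
  rw [hperp, ← h] at this
  nlinarith [norm_nonneg (v - w), norm_nonneg (v - (Submodule.orthogonalProjectionOnto K v : EuclideanSpace ℝ (Fin a))), sq_nonneg ‖(Submodule.orthogonalProjectionOnto K v : EuclideanSpace ℝ (Fin a)) - w‖, h]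

lemma norm_sq_eq {a : ℕ} (v : EuclideanSpace ℝ (Fin a)) : ‖v‖ ^ 2 = ∑ i, (v i) ^ 2 := by
  rw [EuclideanSpace.norm_eq, Real.sq_sqrt (by positivity)]
  simp [sq_abs]

lemma norm_toEuclideanLin_sq {a b : ℕ} (A : Matrix (Fin a) (Fin b) ℝ)
    (w : EuclideanSpace ℝ (Fin b)) :
    ‖toEuclideanLin A w‖ ^ 2
      = (WithLp.equiv 2 _ w) ⬝ᵥ ((Aᵀ * A) *ᵥ (WithLp.equiv 2 _ w)) := by
  rw [norm_sq_eq]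
  have : ∀ i, (toEuclideanLin A w) i = (A *ᵥ (WithLp.equiv 2 _ w)) i := fun i => rfl
  simp_rw [this]
  rw [← mulVec_mulVec, dotProduct_mulVec, vecMul_transpose]
  simp [dotProduct, sq]

lemma key {n₁ n₂ d p : ℕ}
    (A₁ : Matrix (Fin n₁) (Fin d) ℝ) (A₂ : Matrix (Fin n₂) (Fin d) ℝ)
    (hA : (A₁ᵀ * A₁ - A₂ᵀ * A₂).PosSemidef)
    (B₁ : Matrix (Fin d) (Fin p) ℝ) (b : EuclideanSpace ℝ (Fin d)) :
    ‖toEuclideanLin (1 - projMat (A₂ * B₁)) (toEuclideanLin A₂ b)‖ ^ 2 ≤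
      ‖toEuclideanLin (1 - projMat (A₁ * B₁)) (toEuclideanLin A₁ b)‖ ^ 2 := by
  rw [toEuclideanLin_one_sub_projMat, toEuclideanLin_one_sub_projMat]
  set K₁ := LinearMap.range (toEuclideanLin (A₁ * B₁))
  set K₂ := LinearMap.range (toEuclideanLin (A₂ * B₁))
  obtain ⟨c, hc⟩ := (Submodule.orthogonalProjectionOnto K₁ (toEuclideanLin A₁ b)).2
  set w : EuclideanSpace ℝ (Fin d) := b - toEuclideanLin B₁ c with hw
  have h1 : toEuclideanLin A₁ b - (Submodule.orthogonalProjectionOnto K₁ (toEuclideanLin A₁ b) : EuclideanSpace ℝ (Fin n₁))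
      = toEuclideanLin A₁ w := by
    rw [hw, map_sub, ← hc, toEuclideanLin_mul]; rfl
  have h2 : toEuclideanLin A₂ b - toEuclideanLin (A₂ * B₁) c = toEuclideanLin A₂ w := by
    rw [hw, map_sub, toEuclideanLin_mul]; rfl
  have hmin : ‖toEuclideanLin A₂ b - (Submodule.orthogonalProjectionOnto K₂ (toEuclideanLin A₂ b) : EuclideanSpace ℝ (Fin n₂))‖
      ≤ ‖toEuclideanLin A₂ w‖ := by
    rw [← h2]
    exact norm_proj_compl_min K₂ _ _ ⟨c, rfl⟩
  have hstep : ‖toEuclideanLin A₂ w‖ ^ 2 ≤ ‖toEuclideanLin A₁ w‖ ^ 2 := by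
    rw [norm_toEuclideanLin_sq, norm_toEuclideanLin_sq]
    have := hA.dotProduct_mulVec_nonneg (WithLp.equiv 2 _ w)
    simp only [sub_mulVec, dotProduct_sub, RCLike.star_def, star_trivial] at this ⊢
    · simpa using this
  rw [h1]
  calc ‖toEuclideanLin A₂ b - (Submodule.orthogonalProjectionOnto K₂ (toEuclideanLin A₂ b) : EuclideanSpace ℝ (Fin n₂))‖ ^ 2
      ≤ ‖toEuclideanLin A₂ w‖ ^ 2 := by
        apply sq_le_sq' _ hmin
        linarith [norm_nonneg (toEuclideanLin A₂ b - (Submodule.orthogonalProjectionOnto K₂ (toEuclideanLin A₂ b) : EuclideanSpace ℝ (Fin n₂))), norm_nonneg (toEuclideanLin A₂ w)]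
    _ ≤ ‖toEuclideanLin A₁ w‖ ^ 2 := hstep

/-- if `A₁ᵀA₁ ⪰ A₂ᵀA₂` (Loewner order), then for all `B₁, B₂`,
`‖P⊥_{A₁B₁} A₁ B₂‖_F² ≥ ‖P⊥_{A₂B₁} A₂ B₂‖_F²`. -/
theorem stmt1 {n₁ n₂ d p q : ℕ}
    (A₁ : Matrix (Fin n₁) (Fin d) ℝ) (A₂ : Matrix (Fin n₂) (Fin d) ℝ)
    (hA : (A₁ᵀ * A₁ - A₂ᵀ * A₂).PosSemidef)
    (B₁ : Matrix (Fin d) (Fin p) ℝ) (B₂ : Matrix (Fin d) (Fin q) ℝ) :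
    froSq ((1 - projMat (A₂ * B₁)) * (A₂ * B₂)) ≤
      froSq ((1 - projMat (A₁ * B₁)) * (A₁ * B₂)) := by
  have hcol : ∀ {n : ℕ} (A : Matrix (Fin n) (Fin d) ℝ),
      froSq ((1 - projMat (A * B₁)) * (A * B₂)) =
      ∑ j, ‖toEuclideanLin (1 - projMat (A * B₁))
        (toEuclideanLin A ((WithLp.equiv 2 _).symm (fun k => B₂ k j)))‖ ^ 2 := by
    intro n A
    rw [froSq, Finset.sum_comm]
    refine Finset.sum_congr rfl fun j _ => ?_
    rw [norm_sq_eq]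
    refine Finset.sum_congr rfl fun i _ => ?_
    rfl
  rw [hcol A₁, hcol A₂]
  exact Finset.sum_le_sum fun j _ => key A₁ A₂ hA B₁ _
end

section
/- Let Σ₁ and Σ₂ be d×d real positive semidefinite matrices and r > 0 a scalar such that Σ₁ ⪰ r Σ₂ in the Loewner order. Then for every matrix V ∈ ℝ^{d×q} and every vector v ∈ ℝ^d, ‖P⊥_{Σ₂^{1/2} V} Σ₂^{1/2} v‖₂² ≤ (1/r) · ‖P⊥_{Σ₁^{1/2} V} Σ₁^{1/2} v‖₂², where Σ^{1/2} denotes the positive semidefinite square root of Σ. -/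
open Matrix

/-- The positive semidefinite square root of a positive semidefinite matrix
(the definition `Matrix.PosSemidef.sqrt` of the older Mathlib, since removed). -/
noncomputable def Matrix.PosSemidef.sqrt {n : Type*} [Fintype n] [DecidableEq n]
    {A : Matrix n n ℝ} (hA : A.PosSemidef) : Matrix n n ℝ :=
  hA.1.eigenvectorUnitary.1 * diagonal ((↑) ∘ (√·) ∘ hA.1.eigenvalues) *
  (star hA.1.eigenvectorUnitary : Matrix n n ℝ)

lemma Matrix.PosSemidef.sqrt_mul_self' {n : Type*} [Fintype n] [DecidableEq n]
    {A : Matrix n n ℝ} (hA : A.PosSemidef) : hA.sqrt * hA.sqrt = A := by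
  have hU : (star hA.1.eigenvectorUnitary : Matrix n n ℝ) * hA.1.eigenvectorUnitary.1 = 1 :=
    Unitary.coe_star_mul_self _
  have hD : diagonal (((↑) ∘ (√·) ∘ hA.1.eigenvalues) : n → ℝ) *
      diagonal ((↑) ∘ (√·) ∘ hA.1.eigenvalues) = diagonal ((↑) ∘ hA.1.eigenvalues) := by
    rw [diagonal_mul_diagonal]
    congr 1
    funext i
    simp [Real.mul_self_sqrt (hA.eigenvalues_nonneg i)]
  conv_rhs => rw [hA.1.spectral_theorem, Unitary.conjStarAlgAut_apply]
  simp only [Matrix.PosSemidef.sqrt]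
  calc _ = hA.1.eigenvectorUnitary.1 * diagonal ((↑) ∘ (√·) ∘ hA.1.eigenvalues) *
        ((star hA.1.eigenvectorUnitary : Matrix n n ℝ) * hA.1.eigenvectorUnitary.1) *
        diagonal ((↑) ∘ (√·) ∘ hA.1.eigenvalues) *
        (star hA.1.eigenvectorUnitary : Matrix n n ℝ) := by simp only [Matrix.mul_assoc]
    _ = _ := by rw [hU, Matrix.mul_one, Matrix.mul_assoc _ (diagonal _) (diagonal _), hD]; rfl

lemma Matrix.PosSemidef.sqrt_transpose' {n : Type*} [Fintype n] [DecidableEq n]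
    {A : Matrix n n ℝ} (hA : A.PosSemidef) : hA.sqrtᵀ = hA.sqrt := by
  rw [← Matrix.conjTranspose_eq_transpose_of_trivial]
  simp only [Matrix.PosSemidef.sqrt, Matrix.conjTranspose_mul, Matrix.diagonal_conjTranspose,
    Matrix.mul_assoc]
  simp [Matrix.star_eq_conjTranspose]

lemma sumSq_eq_normSq {a : ℕ} (f : Fin a → ℝ) :
    ∑ i, (f i) ^ 2 = ‖(WithLp.equiv 2 (Fin a → ℝ)).symm f‖ ^ 2 := by
  rw [EuclideanSpace.norm_eq, Real.sq_sqrt (by positivity)]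
  simp [sq_abs]

lemma mulVec_projMat {a b : ℕ} (M : Matrix (Fin a) (Fin b) ℝ) (u : Fin a → ℝ) :
    (WithLp.equiv 2 (Fin a → ℝ)).symm ((projMat M) *ᵥ u) =
      (Submodule.orthogonalProjectionOnto (LinearMap.range (Matrix.toEuclideanLin M))
        ((WithLp.equiv 2 (Fin a → ℝ)).symm u) : EuclideanSpace ℝ (Fin a)) := by
  have h := Matrix.toEuclideanLin_apply_piLp_toLp (projMat M) u
  rw [projMat, LinearEquiv.apply_symm_apply] at h
  exact h.symm

/-- The residual of the orthogonal projection: value and minimality. -/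
lemma key_s2 {a b : ℕ} (M : Matrix (Fin a) (Fin b) ℝ) (u : Fin a → ℝ) :
    (∃ x : Fin b → ℝ,
        ∑ i, (((1 - projMat M) *ᵥ u) i) ^ 2 = ∑ i, ((u - M *ᵥ x) i) ^ 2) ∧
      ∀ x : Fin b → ℝ,
        ∑ i, (((1 - projMat M) *ᵥ u) i) ^ 2 ≤ ∑ i, ((u - M *ᵥ x) i) ^ 2 := by
  set K := LinearMap.range (Matrix.toEuclideanLin M) with hK
  set e := (WithLp.equiv 2 (Fin a → ℝ)).symm with he
  set U : EuclideanSpace ℝ (Fin a) := e u with hU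
  set f := (WithLp.equiv 2 (Fin b → ℝ)).symm with hf
  have hres : ∀ x : Fin b → ℝ, e (u - M *ᵥ x) = U - Matrix.toEuclideanLin M (f x) := by
    intro x
    rw [Matrix.toEuclideanLin_apply_piLp_toLp]
    rfl
  have hproj : e ((1 - projMat M) *ᵥ u) = U - (Submodule.orthogonalProjectionOnto K U : EuclideanSpace ℝ (Fin a)) := by
    rw [Matrix.sub_mulVec, Matrix.one_mulVec]
    have := mulVec_projMat M u
    rw [← this]
    rfl
  have hLHS : ∑ i, (((1 - projMat M) *ᵥ u) i) ^ 2 =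
      ‖U - (Submodule.orthogonalProjectionOnto K U : EuclideanSpace ℝ (Fin a))‖ ^ 2 := by
    rw [sumSq_eq_normSq, hproj]
  constructor
  · obtain ⟨y, hy⟩ := (Submodule.orthogonalProjectionOnto K U).2
    refine ⟨WithLp.equiv 2 (Fin b → ℝ) y, ?_⟩
    rw [hLHS, sumSq_eq_normSq, hres]
    congr 2
    rw [Equiv.symm_apply_apply, hy]
  · intro x
    rw [hLHS, sumSq_eq_normSq, hres]
    set w : EuclideanSpace ℝ (Fin a) := Matrix.toEuclideanLin M (f x) with hw
    have hwK : w ∈ K := LinearMap.mem_range_self _ _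
    have hsplit : U - w = (U - (Submodule.orthogonalProjectionOnto K U : EuclideanSpace ℝ (Fin a))) +
        ((Submodule.orthogonalProjectionOnto K U : EuclideanSpace ℝ (Fin a)) - w) := by abel
    have hinner : inner (𝕜 := ℝ) (U - (Submodule.orthogonalProjectionOnto K U : EuclideanSpace ℝ (Fin a)))
        ((Submodule.orthogonalProjectionOnto K U : EuclideanSpace ℝ (Fin a)) - w) = (0 : ℝ) := by
      exact (Submodule.mem_orthogonal' K _).1 (Submodule.sub_starProjection_mem_orthogonal U)
        _ (K.sub_mem (Submodule.orthogonalProjectionOnto K U).2 hwK)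
    rw [hsplit, norm_add_sq_real, hinner]
    nlinarith [sq_nonneg ‖(Submodule.orthogonalProjectionOnto K U : EuclideanSpace ℝ (Fin a)) - w‖,
      sq_nonneg ‖U - (Submodule.orthogonalProjectionOnto K U : EuclideanSpace ℝ (Fin a))‖]

lemma quad {d : ℕ} (S : Matrix (Fin d) (Fin d) ℝ) (hS : S.PosSemidef) (w : Fin d → ℝ) :
    ∑ i, ((hS.sqrt *ᵥ w) i) ^ 2 = w ⬝ᵥ (S *ᵥ w) := by
  have h1 : ∑ i, ((hS.sqrt *ᵥ w) i) ^ 2 = (hS.sqrt *ᵥ w) ⬝ᵥ (hS.sqrt *ᵥ w) := by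
    simp [dotProduct, sq]
  rw [h1, Matrix.dotProduct_mulVec, ← Matrix.mulVec_transpose]
  have ht' : hS.sqrtᵀ = hS.sqrt := by
    exact hS.sqrt_transpose'
  rw [ht', Matrix.mulVec_mulVec, hS.sqrt_mul_self']
  exact dotProduct_comm _ _

/-- if `Σ₁ ⪰ r Σ₂` with `r > 0` (Σ₁, Σ₂ positive semidefinite), then for
every `V ∈ ℝ^{d×q}` and `v ∈ ℝ^d`,
`‖P⊥_{Σ₂^{1/2} V} Σ₂^{1/2} v‖₂² ≤ (1/r) ‖P⊥_{Σ₁^{1/2} V} Σ₁^{1/2} v‖₂²`,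
where `Σ^{1/2}` is the positive semidefinite square root. -/
theorem stmt2 {d q : ℕ} (S₁ S₂ : Matrix (Fin d) (Fin d) ℝ)
    (hS₁ : S₁.PosSemidef) (hS₂ : S₂.PosSemidef) (r : ℝ) (hr : 0 < r)
    (hdom : (S₁ - r • S₂).PosSemidef)
    (V : Matrix (Fin d) (Fin q) ℝ) (v : Fin d → ℝ) :
    ∑ i, (((1 - projMat (hS₂.sqrt * V)) *ᵥ (hS₂.sqrt *ᵥ v)) i) ^ 2 ≤
      (1 / r) * ∑ i, (((1 - projMat (hS₁.sqrt * V)) *ᵥ (hS₁.sqrt *ᵥ v)) i) ^ 2 := by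
  have hresid : ∀ (S : Matrix (Fin d) (Fin d) ℝ) (hS : S.PosSemidef) (x : Fin q → ℝ),
      hS.sqrt *ᵥ v - (hS.sqrt * V) *ᵥ x = hS.sqrt *ᵥ (v - V *ᵥ x) := by
    intro S hS x
    rw [← Matrix.mulVec_mulVec, ← Matrix.mulVec_sub]
  obtain ⟨⟨x, hx⟩, -⟩ := key_s2 (hS₁.sqrt * V) (hS₁.sqrt *ᵥ v)
  obtain ⟨-, hmin⟩ := key_s2 (hS₂.sqrt * V) (hS₂.sqrt *ᵥ v)
  set w := v - V *ᵥ x with hw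
  have h1 : ∑ i, (((1 - projMat (hS₁.sqrt * V)) *ᵥ (hS₁.sqrt *ᵥ v)) i) ^ 2 =
      w ⬝ᵥ (S₁ *ᵥ w) := by
    rw [hx, hresid S₁ hS₁ x]
    exact quad S₁ hS₁ w
  have h2 : ∑ i, (((1 - projMat (hS₂.sqrt * V)) *ᵥ (hS₂.sqrt *ᵥ v)) i) ^ 2 ≤
      w ⬝ᵥ (S₂ *ᵥ w) := by
    have := hmin x
    rwa [hresid S₂ hS₂ x, quad S₂ hS₂ w] at this
  have hdomw : r * (w ⬝ᵥ (S₂ *ᵥ w)) ≤ w ⬝ᵥ (S₁ *ᵥ w) := by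
    have h0 := hdom.dotProduct_mulVec_nonneg w
    simp only [star_trivial, Matrix.sub_mulVec, Matrix.smul_mulVec,
      dotProduct_sub, dotProduct_smul, smul_eq_mul] at h0
    linarith
  rw [h1]
  calc ∑ i, (((1 - projMat (hS₂.sqrt * V)) *ᵥ (hS₂.sqrt *ᵥ v)) i) ^ 2
      ≤ w ⬝ᵥ (S₂ *ᵥ w) := h2
    _ ≤ (1 / r) * (w ⬝ᵥ (S₁ *ᵥ w)) := by
        rw [one_div, inv_mul_eq_div, le_div_iff₀ hr, mul_comm]
        exact hdomw
end

section
/- Suppose the following deterministic conditions hold: (i) 0.9 Bᵀ Σ_T B ⪯ (1/n_T) Bᵀ X_Tᵀ X_T B ⪯ 1.1 Bᵀ Σ_T B for B = [V̂ −V*], where V̂ ∈ ℝ^{d×q}, V* ∈ ℝ^{d×l}; (ii) Σᵢ ⪰ r Σ_T for all i ∈ [m] with r > 0; (iii) 0.9 Σᵢ ⪯ (1/n_s) Xᵢᵀ Xᵢ ⪯ 1.1 Σᵢ for all i; (iv) for each i, Bᵢ* wᵢ* = V* w̃ᵢ* and B̂ᵢ = V̂ Cᵢ for some matrix Cᵢ;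 and (v) Σ_{i=1}^m ‖Xᵢ (B̂ᵢ ŵᵢ − Bᵢ* wᵢ*)‖₂² ≤ E. Then there is a universal constant C such that σ_l²(W̃*) · ‖P⊥_{X_T V̂} X_T V*‖_F² ≤ C · (n_T / (r n_s)) · E, where W̃* := [w̃₁*, …, w̃_m*] ∈ ℝ^{l×m}. -/
open Matrix
open scoped RealInnerProductSpace

namespace Stmt14Aux

lemma psd_dot {n : Type*} [Fintype n] {A : Matrix n n ℝ} (h : A.PosSemidef) (x : n → ℝ) :
    0 ≤ x ⬝ᵥ (A *ᵥ x) := by simpa using h.dotProduct_mulVec_nonneg x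

lemma quad_conj {n p : Type*} [Fintype n] [Fintype p] (A : Matrix n p ℝ) (M : Matrix n n ℝ)
    (z : p → ℝ) : z ⬝ᵥ ((Aᵀ * M * A) *ᵥ z) = (A *ᵥ z) ⬝ᵥ (M *ᵥ (A *ᵥ z)) := by
  rw [Matrix.mul_assoc, ← Matrix.mulVec_mulVec, Matrix.dotProduct_mulVec,
    Matrix.vecMul_transpose, Matrix.mulVec_mulVec]

lemma quad_gram {n p : Type*} [Fintype n] [Fintype p] (A : Matrix n p ℝ) (z : p → ℝ) :
    z ⬝ᵥ ((Aᵀ * A) *ᵥ z) = (A *ᵥ z) ⬝ᵥ (A *ᵥ z) := by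
  rw [← Matrix.mulVec_mulVec, Matrix.dotProduct_mulVec, Matrix.vecMul_transpose]

/-- `projMat` applied via `mulVec` is the orthogonal projection. -/
lemma projMat_mulVec {a b : ℕ} (M : Matrix (Fin a) (Fin b) ℝ) (v : Fin a → ℝ) :
    projMat M *ᵥ v =
      WithLp.equiv 2 (Fin a → ℝ)
        ((Submodule.orthogonalProjectionOnto (LinearMap.range (Matrix.toEuclideanLin M))
          ((WithLp.equiv 2 (Fin a → ℝ)).symm v) : EuclideanSpace ℝ (Fin a))) := by
  have h : Matrix.toEuclideanLin (projMat M) =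
      (LinearMap.range (Matrix.toEuclideanLin M)).subtype ∘ₗ
        (Submodule.orthogonalProjectionOnto (LinearMap.range (Matrix.toEuclideanLin M))).toLinearMap :=
    Matrix.toEuclideanLin.apply_symm_apply _
  have h2 := congrArg (fun f : EuclideanSpace ℝ (Fin a) →ₗ[ℝ] EuclideanSpace ℝ (Fin a) =>
      WithLp.equiv 2 (Fin a → ℝ) (f ((WithLp.equiv 2 (Fin a → ℝ)).symm v))) h
  simpa using h2

/-- The projection fixes vectors in the column space. -/
lemma projMat_fix {a b : ℕ} (M : Matrix (Fin a) (Fin b) ℝ) (x : Fin b → ℝ) :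
    projMat M *ᵥ (M *ᵥ x) = M *ᵥ x := by
  rw [projMat_mulVec]
  have hmem : (WithLp.equiv 2 (Fin a → ℝ)).symm (M *ᵥ x) ∈
      LinearMap.range (Matrix.toEuclideanLin M) :=
    ⟨(WithLp.equiv 2 (Fin b → ℝ)).symm x, by
      rfl⟩
  rw [← Submodule.starProjection_apply, Submodule.starProjection_eq_self_iff.mpr hmem]
  simp

/-- The complementary projection is a contraction (entrywise sum of squares). -/
lemma projMat_contract {a b : ℕ} (M : Matrix (Fin a) (Fin b) ℝ) (v : Fin a → ℝ) :
    ∑ j, (((1 - projMat M) *ᵥ v) j) ^ 2 ≤ ∑ j, (v j) ^ 2 := by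
  set K := LinearMap.range (Matrix.toEuclideanLin M)
  set v' : EuclideanSpace ℝ (Fin a) := (WithLp.equiv 2 (Fin a → ℝ)).symm v
  set w : EuclideanSpace ℝ (Fin a) := v' - (Submodule.orthogonalProjectionOnto K v' : EuclideanSpace ℝ (Fin a))
  have hw : (1 - projMat M) *ᵥ v = WithLp.equiv 2 (Fin a → ℝ) w := by
    rw [Matrix.sub_mulVec, Matrix.one_mulVec, projMat_mulVec]
    rfl
  have hnorm : ‖w‖ ^ 2 ≤ ‖v'‖ ^ 2 := by
    have hperp : w ∈ Kᗮ := K.sub_starProjection_mem_orthogonal v'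
    have hinner : (inner ℝ ((Submodule.orthogonalProjectionOnto K v' : EuclideanSpace ℝ (Fin a))) w : ℝ) = 0 :=
      (Submodule.mem_orthogonal K w).mp hperp _ (Submodule.coe_mem _)
    have hsplit : v' = (Submodule.orthogonalProjectionOnto K v' : EuclideanSpace ℝ (Fin a)) + w := by
      simp [w]
    calc ‖w‖ ^ 2 ≤ ‖(Submodule.orthogonalProjectionOnto K v' : EuclideanSpace ℝ (Fin a))‖ ^ 2
          + 2 * (inner ℝ ((Submodule.orthogonalProjectionOnto K v' : EuclideanSpace ℝ (Fin a))) w : ℝ) + ‖w‖ ^ 2 := by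
          rw [hinner]
          nlinarith [sq_nonneg ‖((Submodule.orthogonalProjectionOnto K v' : EuclideanSpace ℝ (Fin a)))‖]
      _ = ‖v'‖ ^ 2 := by rw [← norm_add_sq_real, ← hsplit]
  have hv' : ‖v'‖ ^ 2 = ∑ j, (v j) ^ 2 := by
    rw [EuclideanSpace.norm_eq, Real.sq_sqrt (by positivity)]
    simp [v', Real.norm_eq_abs, sq_abs]
  have hwn : ‖w‖ ^ 2 = ∑ j, (((1 - projMat M) *ᵥ v) j) ^ 2 := by
    rw [EuclideanSpace.norm_eq, Real.sq_sqrt (by positivity), hw]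
    simp [Real.norm_eq_abs, sq_abs]
  rw [← hv', ← hwn]
  exact hnorm

end Stmt14Aux

open Stmt14Aux in
/-- deterministic content of Lemma 3, target training guarantee:
under the stated concentration, dominance, representation and source-error conditions,
`σ_l²(W̃*) ‖P⊥_{X_T V̂} X_T V*‖_F² ≤ C (n_T/(r n_s)) E`. The quantity `σ_l²(W̃*)`
(the smallest eigenvalue of `W̃*W̃*ᵀ`) is captured by quantifying over all `s ≥ 0` with
`W̃*W̃*ᵀ ⪰ s·I`. -/
theorem stmt14 :
    ∃ C : ℝ, 0 < C ∧
      ∀ (m nT ns d k l q : ℕ)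
        (XT : Matrix (Fin nT) (Fin d) ℝ) (X : Fin m → Matrix (Fin ns) (Fin d) ℝ)
        (ST : Matrix (Fin d) (Fin d) ℝ) (S : Fin m → Matrix (Fin d) (Fin d) ℝ)
        (Vhat : Matrix (Fin d) (Fin q) ℝ) (Vstar : Matrix (Fin d) (Fin l) ℝ)
        (Bstar : Fin m → Matrix (Fin d) (Fin k) ℝ) (wstar : Fin m → Fin k → ℝ)
        (wtil : Fin m → Fin l → ℝ)
        (Bhat : Fin m → Matrix (Fin d) (Fin k) ℝ) (what : Fin m → Fin k → ℝ)
        (r E : ℝ),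
        -- (i) two-sided concentration for `B = [V̂ −V*]` on the target data
        (((nT : ℝ)⁻¹ • ((Matrix.fromCols Vhat (-Vstar))ᵀ * XTᵀ * XT *
              Matrix.fromCols Vhat (-Vstar))
            - (0.9 : ℝ) • ((Matrix.fromCols Vhat (-Vstar))ᵀ * ST *
              Matrix.fromCols Vhat (-Vstar))).PosSemidef) →
        (((1.1 : ℝ) • ((Matrix.fromCols Vhat (-Vstar))ᵀ * ST *
              Matrix.fromCols Vhat (-Vstar))
            - (nT : ℝ)⁻¹ • ((Matrix.fromCols Vhat (-Vstar))ᵀ * XTᵀ * XT *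
              Matrix.fromCols Vhat (-Vstar))).PosSemidef) →
        -- (ii) covariance dominance `Σᵢ ⪰ r Σ_T` with `r > 0`
        (0 < r) → (∀ i, (S i - r • ST).PosSemidef) →
        -- (iii) two-sided concentration for the source data
        (∀ i, ((ns : ℝ)⁻¹ • ((X i)ᵀ * X i) - (0.9 : ℝ) • S i).PosSemidef) →
        (∀ i, ((1.1 : ℝ) • S i - (ns : ℝ)⁻¹ • ((X i)ᵀ * X i)).PosSemidef) →
        -- (iv) representation conditions
        (∀ i, Bstar i *ᵥ wstar i = Vstar *ᵥ wtil i) →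
        (∀ i, ∃ Ci : Matrix (Fin q) (Fin k) ℝ, Bhat i = Vhat * Ci) →
        -- (v) source prediction error bound
        (∑ i, ∑ rr, ((X i *ᵥ (Bhat i *ᵥ what i - Bstar i *ᵥ wstar i)) rr) ^ 2 ≤ E) →
        -- conclusion
        ∀ s : ℝ, 0 ≤ s →
          (((Matrix.of fun j i => wtil i j) * (Matrix.of fun j i => wtil i j)ᵀ
              - s • (1 : Matrix (Fin l) (Fin l) ℝ)).PosSemidef) →
          s * froSq ((1 - projMat (XT * Vhat)) * (XT * Vstar)) ≤
            C * ((nT : ℝ) / (r * ns)) * E := by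
  refine ⟨2, by norm_num, ?_⟩
  intro m nT ns d k l q XT X ST S Vhat Vstar Bstar wstar wtil Bhat what r E
  intro hT1 hT2 hr hdom hs1 hs2 hrep hfac hE s hs hW
  -- notation
  set B := Matrix.fromCols Vhat (-Vstar) with hB
  set Δ : Fin m → Fin d → ℝ := fun i => Bhat i *ᵥ what i - Bstar i *ᵥ wstar i with hΔ
  set N := (1 - projMat (XT * Vhat)) * (XT * Vstar) with hN
  -- Δ i is in the column space of B
  have hBz : ∀ i, ∃ z : (Fin q ⊕ Fin l) → ℝ, B *ᵥ z = Δ i := by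
    intro i
    obtain ⟨Ci, hCi⟩ := hfac i
    refine ⟨Sum.elim (Ci *ᵥ what i) (wtil i), ?_⟩
    rw [hB, Matrix.fromCols_mulVec_sumElim, hΔ]
    simp only [hCi, hrep i, ← Matrix.mulVec_mulVec, Matrix.neg_mulVec]
    abel
  -- per-source scalar chain
  have key : ∀ i, r * ((nT : ℝ)⁻¹ * ((XT *ᵥ Δ i) ⬝ᵥ (XT *ᵥ Δ i))) ≤
      (11/9) * ((ns : ℝ)⁻¹ * ((X i *ᵥ Δ i) ⬝ᵥ (X i *ᵥ Δ i))) := by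
    intro i
    obtain ⟨z, hz⟩ := hBz i
    -- target quadratic form bound
    have h1 := psd_dot hT2 z
    rw [Matrix.sub_mulVec, dotProduct_sub, sub_nonneg, Matrix.smul_mulVec,
      Matrix.smul_mulVec, dotProduct_smul, dotProduct_smul] at h1
    have e1 : z ⬝ᵥ ((Bᵀ * XTᵀ * XT * B) *ᵥ z) = (XT *ᵥ Δ i) ⬝ᵥ (XT *ᵥ Δ i) := by
      have h : Bᵀ * XTᵀ * XT * B = (XT * B)ᵀ * (XT * B) := by
        rw [Matrix.transpose_mul, Matrix.mul_assoc]
      rw [h, quad_gram, ← Matrix.mulVec_mulVec, hz]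
    have e2 : z ⬝ᵥ ((Bᵀ * ST * B) *ᵥ z) = Δ i ⬝ᵥ (ST *ᵥ Δ i) := by
      rw [quad_conj, hz]
    rw [e1, e2] at h1
    -- dominance
    have h2 := psd_dot (hdom i) (Δ i)
    rw [Matrix.sub_mulVec, dotProduct_sub, sub_nonneg, Matrix.smul_mulVec,
      dotProduct_smul] at h2
    -- source quadratic form bound
    have h3 := psd_dot (hs1 i) (Δ i)
    rw [Matrix.sub_mulVec, dotProduct_sub, sub_nonneg, Matrix.smul_mulVec,
      Matrix.smul_mulVec, dotProduct_smul, dotProduct_smul, quad_gram] at h3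
    have c1 : (nT : ℝ)⁻¹ * ((XT *ᵥ Δ i) ⬝ᵥ (XT *ᵥ Δ i)) ≤ 1.1 * (Δ i ⬝ᵥ (ST *ᵥ Δ i)) := by
      simpa [smul_eq_mul] using h1
    have c2 : r * (Δ i ⬝ᵥ (ST *ᵥ Δ i)) ≤ Δ i ⬝ᵥ (S i *ᵥ Δ i) := by
      simpa [smul_eq_mul] using h2
    have c3 : 0.9 * (Δ i ⬝ᵥ (S i *ᵥ Δ i)) ≤ (ns : ℝ)⁻¹ * ((X i *ᵥ Δ i) ⬝ᵥ (X i *ᵥ Δ i)) := by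
      simpa [smul_eq_mul] using h3
    have c3' : Δ i ⬝ᵥ (S i *ᵥ Δ i) ≤ (10/9) * ((ns : ℝ)⁻¹ * ((X i *ᵥ Δ i) ⬝ᵥ (X i *ᵥ Δ i))) := by
      norm_num at c3 ⊢
      linarith
    have h4 := mul_le_mul_of_nonneg_left c1 hr.le
    norm_num at h4 ⊢
    nlinarith [h4, c2, c3']
  -- lower bound: s · froSq N ≤ ∑ i ‖N wtil i‖²
  have hlow : s * froSq N ≤ ∑ i, ∑ j, ((N *ᵥ wtil i) j) ^ 2 := by
    have hrow : ∀ jrow : Fin nT, s * ∑ a, (N jrow a) ^ 2 ≤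
        ∑ i, (∑ a, N jrow a * wtil i a) ^ 2 := by
      intro jrow
      have h := psd_dot hW (fun a => N jrow a)
      rw [Matrix.sub_mulVec, dotProduct_sub, sub_nonneg, Matrix.smul_mulVec,
        dotProduct_smul, Matrix.one_mulVec] at h
      set W : Matrix (Fin l) (Fin m) ℝ := Matrix.of fun j i => wtil i j with hWdef
      have e3 : (fun a => N jrow a) ⬝ᵥ ((W * Wᵀ) *ᵥ (fun a => N jrow a)) =
          ∑ i, (∑ a, N jrow a * wtil i a) ^ 2 := by
        have : W * Wᵀ = (Wᵀ)ᵀ * Wᵀ := by rw [Matrix.transpose_transpose]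
        rw [this, quad_gram]
        simp only [dotProduct, Matrix.mulVec, dotProduct, Matrix.transpose_apply, hWdef,
          Matrix.of_apply]
        congr 1
        ext i
        rw [sq]
        congr 1 <;> · apply Finset.sum_congr rfl; intro a _; ring
      have e4 : ((fun a => N jrow a) ⬝ᵥ (fun a => N jrow a)) = ∑ a, (N jrow a) ^ 2 := by
        simp [dotProduct, sq]
      rw [e3, e4, smul_eq_mul] at h
      exact h
    have swap : ∑ i, ∑ j, ((N *ᵥ wtil i) j) ^ 2 =
        ∑ jrow, ∑ i, (∑ a, N jrow a * wtil i a) ^ 2 := by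
      rw [Finset.sum_comm]
      apply Finset.sum_congr rfl; intro j _
      apply Finset.sum_congr rfl; intro i _
      simp [Matrix.mulVec, dotProduct]
    rw [swap, froSq, Finset.mul_sum]
    exact Finset.sum_le_sum fun jrow _ => hrow jrow
  -- ‖N wtil i‖² ≤ ‖XT Δ i‖²
  have hproj : ∀ i, ∑ j, ((N *ᵥ wtil i) j) ^ 2 ≤ ∑ j, ((XT *ᵥ Δ i) j) ^ 2 := by
    intro i
    obtain ⟨Ci, hCi⟩ := hfac i
    have hNwt : N *ᵥ wtil i = -((1 - projMat (XT * Vhat)) *ᵥ (XT *ᵥ Δ i)) := by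
      have hkill : (1 - projMat (XT * Vhat)) *ᵥ ((XT * Vhat) *ᵥ (Ci *ᵥ what i)) = 0 := by
        rw [Matrix.sub_mulVec, Matrix.one_mulVec, projMat_fix]
        simp
      have hΔi : XT *ᵥ Δ i = (XT * Vhat) *ᵥ (Ci *ᵥ what i) - (XT * Vstar) *ᵥ wtil i := by
        rw [hΔ]
        simp only [Matrix.mulVec_sub, hCi, hrep i, ← Matrix.mulVec_mulVec]
      rw [hΔi, Matrix.mulVec_sub, hkill, zero_sub, neg_neg, hN, ← Matrix.mulVec_mulVec]
    rw [hNwt]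
    calc ∑ j, ((-((1 - projMat (XT * Vhat)) *ᵥ (XT *ᵥ Δ i))) j) ^ 2
        = ∑ j, (((1 - projMat (XT * Vhat)) *ᵥ (XT *ᵥ Δ i)) j) ^ 2 := by
          apply Finset.sum_congr rfl; intro j _; simp [neg_sq]
      _ ≤ ∑ j, ((XT *ᵥ Δ i) j) ^ 2 := projMat_contract _ _
  -- E is nonnegative
  have hEsum : ∑ i, (X i *ᵥ Δ i) ⬝ᵥ (X i *ᵥ Δ i) ≤ E := by
    calc ∑ i, (X i *ᵥ Δ i) ⬝ᵥ (X i *ᵥ Δ i) = ∑ i, ∑ rr, ((X i *ᵥ Δ i) rr) ^ 2 := by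
          apply Finset.sum_congr rfl; intro i _
          simp [dotProduct, sq]
      _ ≤ E := hE
  -- case nT = 0
  rcases Nat.eq_zero_or_pos nT with hnT | hnT
  · subst hnT
    have h0 : froSq N = 0 := by simp [froSq]
    rw [h0, mul_zero]
    have hE0 : 0 ≤ E := le_trans (Finset.sum_nonneg fun i _ =>
      Finset.sum_nonneg fun rr _ => sq_nonneg _) hE
    simp
  -- main case
  have hnT' : (0:ℝ) < (nT : ℝ) := by exact_mod_cast hnT
  have hns : (0:ℝ) ≤ (ns : ℝ)⁻¹ := by positivity
  set b : Fin m → ℝ := fun i => (X i *ᵥ Δ i) ⬝ᵥ (X i *ᵥ Δ i) with hbdef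
  have hEsum : ∑ i, b i ≤ E := by
    calc ∑ i, b i = ∑ i, ∑ rr, ((X i *ᵥ Δ i) rr) ^ 2 := by
          apply Finset.sum_congr rfl; intro i _
          simp [hbdef, dotProduct, sq]
      _ ≤ E := hE
  have haux : ∀ i, (XT *ᵥ Δ i) ⬝ᵥ (XT *ᵥ Δ i) ≤
      (nT : ℝ) * r⁻¹ * ((11/9) * ((ns : ℝ)⁻¹ * b i)) := by
    intro i
    have h5 := mul_le_mul_of_nonneg_left (key i)
      (show (0:ℝ) ≤ (nT : ℝ) * r⁻¹ by positivity)
    calc (XT *ᵥ Δ i) ⬝ᵥ (XT *ᵥ Δ i)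
        = (nT : ℝ) * r⁻¹ * (r * ((nT : ℝ)⁻¹ * ((XT *ᵥ Δ i) ⬝ᵥ (XT *ᵥ Δ i)))) := by
          field_simp
      _ ≤ (nT : ℝ) * r⁻¹ * ((11/9) * ((ns : ℝ)⁻¹ * b i)) := h5
  have hmid : s * froSq N ≤ ∑ i, (XT *ᵥ Δ i) ⬝ᵥ (XT *ᵥ Δ i) := by
    calc s * froSq N ≤ ∑ i, ∑ j, ((N *ᵥ wtil i) j) ^ 2 := hlow
      _ ≤ ∑ i, ∑ j, ((XT *ᵥ Δ i) j) ^ 2 := Finset.sum_le_sum fun i _ => hproj i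
      _ = ∑ i, (XT *ᵥ Δ i) ⬝ᵥ (XT *ᵥ Δ i) := by
          apply Finset.sum_congr rfl; intro i _
          simp [dotProduct, sq]
  have hbnn : ∀ i, 0 ≤ b i := by
    intro i
    have : b i = ∑ rr, ((X i *ᵥ Δ i) rr) ^ 2 := by simp [hbdef, dotProduct, sq]
    rw [this]
    exact Finset.sum_nonneg fun rr _ => sq_nonneg _
  have hsumb : 0 ≤ ∑ i, b i := Finset.sum_nonneg fun i _ => hbnn i
  have hEnn : 0 ≤ E := le_trans hsumb hEsum
  have hchain : ∑ i, (XT *ᵥ Δ i) ⬝ᵥ (XT *ᵥ Δ i) ≤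
      (nT : ℝ) * r⁻¹ * ((11/9) * ((ns : ℝ)⁻¹ * ∑ i, b i)) := by
    calc ∑ i, (XT *ᵥ Δ i) ⬝ᵥ (XT *ᵥ Δ i)
        ≤ ∑ i, (nT : ℝ) * r⁻¹ * ((11/9) * ((ns : ℝ)⁻¹ * b i)) :=
          Finset.sum_le_sum fun i _ => haux i
      _ = (nT : ℝ) * r⁻¹ * ((11/9) * ((ns : ℝ)⁻¹ * ∑ i, b i)) := by
          simp only [Finset.mul_sum]
  have hfinal : (nT : ℝ) * r⁻¹ * ((11/9) * ((ns : ℝ)⁻¹ * ∑ i, b i)) ≤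
      2 * ((nT : ℝ) / (r * ns)) * E := by
    have hdiv : (nT : ℝ) / (r * ns) = (nT : ℝ) * r⁻¹ * (ns : ℝ)⁻¹ := by
      rw [div_eq_mul_inv, mul_inv, ← mul_assoc]
    rw [hdiv]
    have step1 : (ns : ℝ)⁻¹ * ∑ i, b i ≤ (ns : ℝ)⁻¹ * E :=
      mul_le_mul_of_nonneg_left hEsum hns
    have step2 : (nT : ℝ) * r⁻¹ * ((11/9) * ((ns : ℝ)⁻¹ * ∑ i, b i)) ≤
        (nT : ℝ) * r⁻¹ * ((11/9) * ((ns : ℝ)⁻¹ * E)) := by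
      apply mul_le_mul_of_nonneg_left _ (by positivity)
      linarith
    have hnn : 0 ≤ (nT : ℝ) * r⁻¹ * ((ns : ℝ)⁻¹ * E) := by positivity
    nlinarith [step2, hnn]
  linarith
end
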